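/- Let 2 ≤ m ≤ n be integers, let L be the m×m lower triangular matrix with L_{ii} = √((m−i)/(m−i+1)) for i < m, L_{ij} = −1/√((m−j+1)(m−j)) for j < i, and L_{ij} = 0 otherwise, and let J be the m×n all-ones matrix. Let Q be a real m×n matrix with Q Qᵀ = I_m whose m-th row equals ξ_nᵀ = (1/√n)1_nᵀ. Then W = L Q + (1/√(mn)) J satisfies W Wᵀ = I_m and W ξ_n = ξ_m; that is, W is a semi-orthogonal matrix attaining the maximal entry sum √(mn). -/

import Mathlib

open Matrix Finset
set_option maxHeartbeats 1000000

private lemma tele_sum (m : ℕ) : ∀ i : ℕ, i < m →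
    ∑ k ∈ Finset.range i, 1/(((m:ℝ)-k)*((m:ℝ)-k-1)) = 1/((m:ℝ)-i) - 1/(m:ℝ) := by
  intro i
  induction i with
  | zero => intro _; simp
  | succ i ih =>
    intro h
    have h1 : (i:ℝ) + 1 < (m:ℝ) := by exact_mod_cast h
    have h0 : (0:ℝ) < (m:ℝ) := by
      have : 0 < m := by omega
      exact_mod_cast this
    rw [Finset.sum_range_succ, ih (by omega)]
    have hne1 : (m:ℝ) - i ≠ 0 := by nlinarith
    have hne2 : (m:ℝ) - i - 1 ≠ 0 := by nlinarith
    have hne3 : (m:ℝ) ≠ 0 := ne_of_gt h0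
    have hne4 : (m:ℝ) - ((i:ℝ)+1) ≠ 0 := by nlinarith
    push_cast
    field_simp
    ring

theorem cholesky_construction_is_optimal
    (m n : ℕ) (hm : 2 ≤ m) (hmn : m ≤ n)
    (L : Matrix (Fin m) (Fin m) ℝ)
    (hL : ∀ i j : Fin m, L i j =
      if j < i then -(1 / Real.sqrt (((m : ℝ) - j) * ((m : ℝ) - j - 1)))
      else if i = j ∧ (i : ℕ) + 1 < m then Real.sqrt (((m : ℝ) - i - 1) / ((m : ℝ) - i))
      else 0)
    (Q : Matrix (Fin m) (Fin n) ℝ)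
    (hQ : Q * Qᵀ = 1)
    (hQlast : ∀ j : Fin n, Q ⟨m - 1, by omega⟩ j = 1 / Real.sqrt n)
    (W : Matrix (Fin m) (Fin n) ℝ)
    (hWdef : W = L * Q + (1 / Real.sqrt ((m : ℝ) * n)) • Matrix.of (fun _ _ => (1 : ℝ))) :
    W * Wᵀ = 1 ∧
    W.mulVec (fun _ : Fin n => 1 / Real.sqrt n) = fun _ : Fin m => 1 / Real.sqrt m := by
  have hn : 2 ≤ n := le_trans hm hmn
  have hM0 : (0:ℝ) < (m:ℝ) := by exact_mod_cast (by omega : 0 < m)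
  have hN0 : (0:ℝ) < (n:ℝ) := by exact_mod_cast (by omega : 0 < n)
  have hMne : (m:ℝ) ≠ 0 := ne_of_gt hM0
  have hNne : (n:ℝ) ≠ 0 := ne_of_gt hN0
  have hsqn : (0:ℝ) < Real.sqrt n := Real.sqrt_pos.mpr hN0
  have hsqm : (0:ℝ) < Real.sqrt m := Real.sqrt_pos.mpr hM0
  set last : Fin m := ⟨m - 1, by omega⟩ with hlast
  set c : ℝ := 1 / Real.sqrt ((m:ℝ) * n) with hc
  -- last column of L vanishes
  have hLlast : ∀ i : Fin m, L i last = 0 := by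
    intro i
    rw [hL]
    have h1 : ¬ (last < i) := by
      rw [Fin.lt_def]
      have := i.isLt
      simp only [hlast]
      omega
    rw [if_neg h1, if_neg]
    rintro ⟨rfl, h2⟩
    simp only [hlast] at h2
    omega
  -- row sums of Q
  have hrowQ : ∀ t : Fin m, ∑ k : Fin n, Q t k = if t = last then Real.sqrt n else 0 := by
    intro t
    by_cases ht : t = last
    · subst ht
      rw [if_pos rfl]
      simp only [hQlast]
      rw [Finset.sum_const, Finset.card_univ, Fintype.card_fin, nsmul_eq_mul,
        mul_one_div, Real.div_sqrt]
    · rw [if_neg ht]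
      have h1 : (Q * Qᵀ) t last = (1 : Matrix (Fin m) (Fin m) ℝ) t last := by rw [hQ]
      rw [Matrix.one_apply_ne ht, Matrix.mul_apply] at h1
      simp only [Matrix.transpose_apply, hQlast] at h1
      have h2 : (∑ k : Fin n, Q t k) * (1 / Real.sqrt n) = 0 := by
        rw [Finset.sum_mul]; exact h1
      rcases mul_eq_zero.mp h2 with h | h
      · exact h
      · exact absurd h (by positivity)
  -- row sums of L*Q vanish
  have hLQrow : ∀ i : Fin m, ∑ k : Fin n, (L * Q) i k = 0 := by
    intro i
    simp only [Matrix.mul_apply]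
    rw [Finset.sum_comm]
    have : ∀ t : Fin m, ∑ k : Fin n, L i t * Q t k = L i t * (if t = last then Real.sqrt n else 0) := by
      intro t
      rw [← Finset.mul_sum, hrowQ]
    rw [Finset.sum_congr rfl (fun t _ => this t)]
    simp only [mul_ite, mul_zero]
    rw [Finset.sum_ite_eq' Finset.univ last (fun t => L i t * Real.sqrt n)]
    simp [hLlast]
  -- main computation: L * Lᵀ entries
  have key : ∀ i j : Fin m, (i:ℕ) ≤ (j:ℕ) →
      ∑ k : Fin m, L i k * L j k = (if i = j then (1:ℝ) else 0) - 1/(m:ℝ) := by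
    intro i j hij
    have hjm : (j:ℕ) < m := j.isLt
    have him : (i:ℕ) < m := i.isLt
    set E : ℝ := L i i * L j i with hE
    have hstep : ∀ k : Fin m, L i k * L j k =
        (if (k:ℕ) < (i:ℕ) then 1/(((m:ℝ)-(k:ℕ))*((m:ℝ)-(k:ℕ)-1))
         else if (k:ℕ) = (i:ℕ) then E else 0) := by
      intro k
      by_cases h1 : (k:ℕ) < (i:ℕ)
      · have hk2 : (k:ℕ) + 2 ≤ m := by omega
        have hkr : ((k:ℕ):ℝ) + 2 ≤ (m:ℝ) := by exact_mod_cast hk2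
        have hnn : (0:ℝ) ≤ ((m:ℝ)-(k:ℕ)) * ((m:ℝ)-(k:ℕ)-1) := by nlinarith
        rw [hL i k, hL j k, if_pos (show k < i from Fin.lt_def.mpr h1),
          if_pos (show k < j from Fin.lt_def.mpr (by omega)),
          if_pos h1, neg_mul_neg, div_mul_div_comm, one_mul, Real.mul_self_sqrt hnn]
      · by_cases h2 : (k:ℕ) = (i:ℕ)
        · have hk : k = i := Fin.ext h2
          subst hk
          rw [if_neg h1, if_pos h2]
        · have hz : L i k = 0 := by
            rw [hL, if_neg, if_neg]
            · rintro ⟨rfl, -⟩; exact h2 rfl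
            · rw [Fin.lt_def]; omega
          rw [hz, zero_mul, if_neg h1, if_neg h2]
    have hsum : ∑ k : Fin m, L i k * L j k =
        (∑ k ∈ Finset.range (i:ℕ), 1/(((m:ℝ)-k)*((m:ℝ)-k-1))) + E := by
      rw [Finset.sum_congr rfl (fun k _ => hstep k),
        Fin.sum_univ_eq_sum_range (fun k : ℕ =>
          if k < (i:ℕ) then 1/(((m:ℝ)-k)*((m:ℝ)-k-1)) else if k = (i:ℕ) then E else 0) m]
      have hsplit : ∀ k : ℕ,
          (if k < (i:ℕ) then 1/(((m:ℝ)-k)*((m:ℝ)-k-1)) else if k = (i:ℕ) then E else 0)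
          = (if k < (i:ℕ) then 1/(((m:ℝ)-k)*((m:ℝ)-k-1)) else 0)
            + (if k = (i:ℕ) then E else 0) := by
        intro k
        by_cases h1 : k < (i:ℕ)
        · rw [if_pos h1, if_pos h1, if_neg (by omega), add_zero]
        · rw [if_neg h1, if_neg h1, zero_add]
      rw [Finset.sum_congr rfl (fun k _ => hsplit k), Finset.sum_add_distrib]
      congr 1
      · rw [← Finset.sum_subset (Finset.range_subset_range.mpr (le_of_lt him))
          (fun x _ hx => by rw [if_neg (by simpa using hx)])]
        exact Finset.sum_congr rfl (fun k hk => if_pos (Finset.mem_range.mp hk))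
      · rw [Finset.sum_eq_single_of_mem (i:ℕ) (Finset.mem_range.mpr him)
          (fun b _ hb => if_neg hb), if_pos rfl]
    rw [hsum, tele_sum m (i:ℕ) him]
    -- now compute E
    rcases eq_or_lt_of_le hij with heq | hlt
    · have hij' : i = j := Fin.ext heq
      subst hij'
      rw [if_pos rfl]
      by_cases hi1 : (i:ℕ) + 1 < m
      · have hLii : L i i = Real.sqrt (((m:ℝ)-(i:ℕ)-1)/((m:ℝ)-(i:ℕ))) := by
          rw [hL, if_neg (lt_irrefl i), if_pos ⟨rfl, hi1⟩]
        have hir : ((i:ℕ):ℝ) + 2 ≤ (m:ℝ) := by exact_mod_cast (by omega : (i:ℕ) + 2 ≤ m)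
        have hnn : (0:ℝ) ≤ ((m:ℝ)-(i:ℕ)-1)/((m:ℝ)-(i:ℕ)) := by
          apply div_nonneg <;> nlinarith
        have hEval : E = ((m:ℝ)-(i:ℕ)-1)/((m:ℝ)-(i:ℕ)) := by
          rw [hE, hLii, Real.mul_self_sqrt hnn]
        rw [hEval]
        have h1 : (m:ℝ)-(i:ℕ) ≠ 0 := by nlinarith
        field_simp
        ring
      · have hieq : (i:ℕ) = m - 1 := by omega
        have hLii : L i i = 0 := by
          rw [hL, if_neg (lt_irrefl i), if_neg (by rintro ⟨-, h⟩; omega)]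
        have hEval : E = 0 := by rw [hE, hLii, zero_mul]
        have hmi : (m:ℝ) - ((i:ℕ):ℝ) = 1 := by
          rw [hieq]
          have : ((m - 1 : ℕ):ℝ) = (m:ℝ) - 1 := by
            push_cast [Nat.cast_sub (by omega : 1 ≤ m)]; ring
          rw [this]; ring
        rw [hEval, hmi]
        ring
    · -- i < j
      have hij' : i ≠ j := fun h => by rw [h] at hlt; exact lt_irrefl _ hlt
      rw [if_neg hij']
      have hi1 : (i:ℕ) + 1 < m := by omega
      have hir : ((i:ℕ):ℝ) + 2 ≤ (m:ℝ) := by exact_mod_cast (by omega : (i:ℕ) + 2 ≤ m)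
      set a : ℝ := (m:ℝ) - (i:ℕ) - 1 with ha
      set b : ℝ := (m:ℝ) - (i:ℕ) with hb
      have hapos : 0 < a := by rw [ha]; nlinarith
      have hbpos : 0 < b := by rw [hb]; nlinarith
      have hLii : L i i = Real.sqrt (a/b) := by
        rw [hL, if_neg (lt_irrefl i), if_pos ⟨rfl, hi1⟩]
      have hLji : L j i = -(1 / Real.sqrt (b * a)) := by
        rw [hL, if_pos (Fin.lt_def.mpr hlt)]
      have hane : a ≠ 0 := ne_of_gt hapos
      have hbne : b ≠ 0 := ne_of_gt hbpos
      have hEval : E = -(1/b) := by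
        rw [hE, hLii, hLji, mul_neg, mul_one_div,
          show Real.sqrt (a/b) / Real.sqrt (b*a) = Real.sqrt ((a/b)/(b*a)) from
            (Real.sqrt_div (div_nonneg hapos.le hbpos.le) _).symm,
          show (a/b)/(b*a) = (1/b)^2 by field_simp,
          Real.sqrt_sq (one_div_nonneg.mpr hbpos.le)]
      rw [hEval]
      ring
  -- symmetric version
  have hLL : ∀ i j : Fin m,
      ∑ k : Fin m, L i k * L j k = (if i = j then (1:ℝ) else 0) - 1/(m:ℝ) := by
    intro i j
    rcases le_total (i:ℕ) (j:ℕ) with h | h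
    · exact key i j h
    · have h2 := key j i h
      calc ∑ k : Fin m, L i k * L j k = ∑ k : Fin m, L j k * L i k := by
            exact Finset.sum_congr rfl (fun k _ => mul_comm _ _)
        _ = (if j = i then (1:ℝ) else 0) - 1/(m:ℝ) := h2
        _ = (if i = j then (1:ℝ) else 0) - 1/(m:ℝ) := by simp [eq_comm]
  -- (L*Q)*(L*Q)ᵀ = L*Lᵀ
  have hLQLQ : (L * Q) * (L * Q)ᵀ = L * Lᵀ := by
    rw [Matrix.transpose_mul, Matrix.mul_assoc, ← Matrix.mul_assoc Q, hQ, Matrix.one_mul]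
  have hW : ∀ (a : Fin m) (b : Fin n), W a b = (L * Q) a b + c := by
    intro a b
    rw [hWdef]
    simp [Matrix.add_apply, Matrix.smul_apply, hc]
  have hc2 : c * c = 1 / ((m:ℝ) * n) := by
    rw [hc, div_mul_div_comm, one_mul, Real.mul_self_sqrt (by positivity)]
  constructor
  · ext i j
    have hdot : ∑ k : Fin n, (L * Q) i k * (L * Q) j k = (if i = j then (1:ℝ) else 0) - 1/(m:ℝ) := by
      have h1 : ((L * Q) * (L * Q)ᵀ) i j = (L * Lᵀ) i j := by rw [hLQLQ]
      rw [Matrix.mul_apply, Matrix.mul_apply] at h1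
      simp only [Matrix.transpose_apply] at h1
      rw [h1]
      exact hLL i j
    rw [Matrix.mul_apply]
    simp only [Matrix.transpose_apply, hW]
    have hexp : ∑ k : Fin n, ((L * Q) i k + c) * ((L * Q) j k + c)
        = (∑ k : Fin n, (L * Q) i k * (L * Q) j k)
          + (∑ k : Fin n, (L * Q) i k) * c + c * (∑ k : Fin n, (L * Q) j k)
          + (n:ℝ) * (c * c) := by
      simp only [add_mul, mul_add]
      rw [Finset.sum_add_distrib, Finset.sum_add_distrib, Finset.sum_add_distrib,
        ← Finset.sum_mul, ← Finset.mul_sum, Finset.sum_const, Finset.card_univ,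
        Fintype.card_fin, nsmul_eq_mul]
      ring
    rw [hexp, hdot, hLQrow i, hLQrow j, hc2, mul_zero, zero_mul, add_zero, add_zero]
    rw [Matrix.one_apply]
    have : (n:ℝ) * (1 / ((m:ℝ) * n)) = 1/(m:ℝ) := by field_simp
    rw [this]
    ring
  · funext i
    simp only [Matrix.mulVec, dotProduct, hW]
    have hexp : ∑ k : Fin n, ((L * Q) i k + c) * (1 / Real.sqrt n)
        = (∑ k : Fin n, (L * Q) i k) * (1 / Real.sqrt n) + (n:ℝ) * (c * (1 / Real.sqrt n)) := by
      simp only [add_mul]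
      rw [Finset.sum_add_distrib, ← Finset.sum_mul, Finset.sum_const, Finset.card_univ,
        Fintype.card_fin, nsmul_eq_mul]
    rw [hexp, hLQrow i, zero_mul, zero_add, hc,
      Real.sqrt_mul hM0.le]
    have hsqmne : Real.sqrt (m:ℝ) ≠ 0 := ne_of_gt hsqm
    have hsqnne : Real.sqrt (n:ℝ) ≠ 0 := ne_of_gt hsqn
    field_simp
    rw [Real.sq_sqrt hN0.le]
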